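/- (Worst-case expected square loss identity.) Let (X_1,Y_1),…,(X_n,Y_n) ∈ ℝ^d × ℝ, let P_n be their empirical measure, let q, t ∈ [1,∞] with conjugates p, s (1/p + 1/q = 1, 1/s + 1/t = 1), let α ∈ ℝ^d̄ have strictly positive entries, and let c be the cost function c((x,y),(x',y')) = ‖x − x'‖_{α⁻¹-(q,t)}² if y = y' and +∞ otherwise. Then for every β ∈ ℝ^d and every δ > 0, sup { E_P[(Y − Xᵀβ)²] : P a probability measure on ℝ^{d+1} with D_c(P, P_n) ≤ δ } = ( (E_{P_n}[(Y − Xᵀβ)²])^{1/2} + √δ · ‖β‖_{α-(p,s)} )². -/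

import Mathlib

open scoped ENNReal BigOperators
open MeasureTheory Filter

/-- The l_p norm (p ∈ [1,∞], with sup modification at p = ∞) of a finite real vector. -/
noncomputable def lpn (p : ℝ≥0∞) {ι : Type} [Fintype ι] (x : ι → ℝ) : ℝ :=
  ‖(WithLp.equiv p (ι → ℝ)).symm x‖

/-- The α-(p,s) groupwise norm: ‖x‖ = ( Σ_i α_i^s ‖x(G_i)‖_p^s )^{1/s}. -/
noncomputable def gnorm {d dbar : ℕ} (G : Fin dbar → Finset (Fin d)) (α : Fin dbar → ℝ)
    (p s : ℝ≥0∞) (x : Fin d → ℝ) : ℝ :=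
  lpn s (fun i => α i * lpn p (fun j : {k // k ∈ G i} => x j.1))

/-- G_1, …, G_d̄ form a partition of {1,…,d} into nonempty disjoint groups. -/
def IsPartition {d dbar : ℕ} (G : Fin dbar → Finset (Fin d)) : Prop :=
  (∀ i, (G i).Nonempty) ∧ (∀ i j, i ≠ j → Disjoint (G i) (G j)) ∧ (∀ k, ∃ i, k ∈ G i)

/-- Optimal transport discrepancy with cost `c`: the Kantorovich infimum over couplings of
`P` and `Q`. -/
noncomputable def Dc {E : Type} [MeasurableSpace E] (c : E → E → ℝ≥0∞)
    (P Q : Measure E) : ℝ≥0∞ :=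
  ⨅ (π : Measure (E × E)) (_ : π.map Prod.fst = P) (_ : π.map Prod.snd = Q),
    ∫⁻ z, c z.1 z.2 ∂π


lemma conj_cases {p q : ℝ≥0∞} (hp : 1 ≤ p) (hq : 1 ≤ q) (hpq : 1/p + 1/q = 1) :
    (p = 1 ∧ q = ∞) ∨ (p = ∞ ∧ q = 1) ∨
      (p ≠ ∞ ∧ q ≠ ∞ ∧ p.toReal.HolderConjugate q.toReal) := by
  have hp0 : p ≠ 0 := by intro h; rw [h] at hp; exact absurd hp (by simp)
  have hq0 : q ≠ 0 := by intro h; rw [h] at hq; exact absurd hq (by simp)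
  rw [one_div, one_div] at hpq
  rcases eq_or_lt_of_le hp with hp1 | hp1
  · left
    refine ⟨hp1.symm, ?_⟩
    rw [← hp1, inv_one] at hpq
    have : q⁻¹ = 0 := by
      have h2 : 1 + q⁻¹ = 1 + 0 := by rw [hpq, add_zero]
      exact (ENNReal.add_right_inj ENNReal.one_ne_top).1 h2
    simpa using this
  rcases eq_or_lt_of_le hq with hq1 | hq1
  · right; left
    refine ⟨?_, hq1.symm⟩
    rw [← hq1, inv_one] at hpq
    have : p⁻¹ = 0 := by
      have h2 : 1 + p⁻¹ = 1 + 0 := by rw [add_comm, hpq, add_zero]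
      exact (ENNReal.add_right_inj ENNReal.one_ne_top).1 h2
    simpa using this
  -- now 1 < p, 1 < q
  have hpt : p ≠ ∞ := by
    intro h
    rw [h, ENNReal.inv_top, zero_add, ENNReal.inv_eq_one] at hpq
    exact hq1.ne' hpq
  have hqt : q ≠ ∞ := by
    intro h
    rw [h, ENNReal.inv_top, add_zero, ENNReal.inv_eq_one] at hpq
    exact hp1.ne' hpq
  right; right
  refine ⟨hpt, hqt, Real.holderConjugate_iff.mpr ⟨?_, ?_⟩⟩
  · have := ENNReal.toReal_lt_toReal (by simp : (1:ℝ≥0∞) ≠ ∞) hpt |>.2 hp1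
    simpa using this
  · have h1 : (p⁻¹ + q⁻¹).toReal = 1 := by rw [hpq]; simp
    rw [ENNReal.toReal_add (by simp [hp0]) (by simp [hq0]), ENNReal.toReal_inv,
      ENNReal.toReal_inv] at h1
    exact h1

variable {ι : Type} [Fintype ι]

lemma lpn_top (x : ι → ℝ) : lpn ∞ x = ‖x‖ := by
  rw [lpn, ← coe_nnnorm, WithLp.equiv_symm_apply, PiLp.nnnorm_toLp, coe_nnnorm]

lemma lpn_eq_sum {p : ℝ≥0∞} (hp0 : p ≠ 0) (hpt : p ≠ ∞) (x : ι → ℝ) :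
    lpn p x = (∑ i, |x i| ^ p.toReal) ^ (1 / p.toReal) := by
  rw [lpn, PiLp.norm_eq_sum (ENNReal.toReal_pos hp0 hpt)]
  simp [WithLp.equiv_symm_apply, PiLp.toLp_apply, Real.norm_eq_abs]

lemma lpn_one (x : ι → ℝ) : lpn 1 x = ∑ i, |x i| := by
  rw [lpn_eq_sum one_ne_zero ENNReal.one_ne_top]
  simp

lemma lpn_holder {p q : ℝ≥0∞} (hp : 1 ≤ p) (hq : 1 ≤ q) (hpq : 1/p + 1/q = 1)
    (a b : ι → ℝ) : ∑ i, |a i * b i| ≤ lpn q a * lpn p b := by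
  rcases conj_cases hp hq hpq with ⟨hp1, hq1⟩ | ⟨hp1, hq1⟩ | ⟨hpt, hqt, hc⟩
  · subst hp1; subst hq1
    rw [lpn_top, lpn_one, Finset.mul_sum]
    refine Finset.sum_le_sum fun i _ => ?_
    rw [abs_mul]
    exact mul_le_mul_of_nonneg_right (norm_le_pi_norm a i) (abs_nonneg _)
  · subst hp1; subst hq1
    rw [lpn_top, lpn_one, Finset.sum_mul]
    refine Finset.sum_le_sum fun i _ => ?_
    rw [abs_mul]
    exact mul_le_mul_of_nonneg_left (norm_le_pi_norm b i) (abs_nonneg _)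
  · have := Real.inner_le_Lp_mul_Lq Finset.univ (fun i => |a i|) (fun i => |b i|) hc.symm
    simp only [abs_abs] at this
    calc ∑ i, |a i * b i| = ∑ i, |a i| * |b i| := by simp [abs_mul]
    _ ≤ (∑ i, |a i| ^ q.toReal) ^ (1/q.toReal) * (∑ i, |b i| ^ p.toReal) ^ (1/p.toReal) := this
    _ = lpn q a * lpn p b := by
        rw [lpn_eq_sum (by positivity) hqt, lpn_eq_sum (by positivity) hpt]

lemma lpn_zero {p : ℝ≥0∞} (hp : 1 ≤ p) : lpn p (0 : ι → ℝ) = 0 := by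
  haveI : Fact (1 ≤ p) := ⟨hp⟩
  simp [lpn]

lemma lpn_dual {p q : ℝ≥0∞} (hp : 1 ≤ p) (hq : 1 ≤ q) (hpq : 1/p + 1/q = 1)
    (b : ι → ℝ) : ∃ a : ι → ℝ, lpn q a ≤ 1 ∧ ∑ i, a i * b i = lpn p b := by
  classical
  by_cases hb : b = 0
  · exact ⟨0, by rw [lpn_zero hq]; norm_num, by simp [hb, lpn_zero hp]⟩
  rcases conj_cases hp hq hpq with ⟨hp1, hq1⟩ | ⟨hp1, hq1⟩ | ⟨hpt, hqt, hc⟩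
  · subst hp1; subst hq1
    refine ⟨fun i => if b i < 0 then -1 else 1, ?_, ?_⟩
    · rw [lpn_top]
      refine (pi_norm_le_iff_of_nonneg zero_le_one).2 fun i => ?_
      by_cases h : b i < 0 <;> simp [h]
    · rw [lpn_one]
      refine Finset.sum_congr rfl fun i _ => ?_
      by_cases h : b i < 0
      · simp [h, abs_of_neg h]
      · simp [h, abs_of_nonneg (not_lt.1 h)]
  · subst hp1; subst hq1
    obtain ⟨i₀, hi₀⟩ : ∃ i, b i ≠ 0 := Function.ne_iff.1 hb
    obtain ⟨j, -, hj⟩ := Finset.exists_max_image Finset.univ (fun i => |b i|)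
      ⟨i₀, Finset.mem_univ i₀⟩
    refine ⟨fun i => if i = j then (if b j < 0 then -1 else 1) else 0, ?_, ?_⟩
    · rw [lpn_one]
      rw [Finset.sum_eq_single j (fun i _ h => by simp [h]) (by simp)]
      by_cases h : b j < 0 <;> simp [h]
    · rw [Finset.sum_eq_single j (fun i _ h => by simp [h]) (by simp)]
      have hbj : (if b j < 0 then (-1:ℝ) else 1) * b j = |b j| := by
        by_cases h : b j < 0
        · simp [h, abs_of_neg h]
        · simp [h, abs_of_nonneg (not_lt.1 h)]
      simp only [if_pos rfl, if_true]
      rw [hbj, lpn_top]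
      refine le_antisymm (norm_le_pi_norm b j) ?_
      exact (pi_norm_le_iff_of_nonneg (abs_nonneg _)).2 fun i => hj i (Finset.mem_univ i)
  · -- finite case
    set pr := p.toReal with hpr
    set qr := q.toReal with hqr
    obtain ⟨i₀, hi₀⟩ : ∃ i, b i ≠ 0 := Function.ne_iff.1 hb
    have hS : 0 < ∑ i, |b i| ^ pr := by
      refine Finset.sum_pos' (fun i _ => Real.rpow_nonneg (abs_nonneg _) _) ⟨i₀, Finset.mem_univ _, ?_⟩
      exact Real.rpow_pos_of_pos (abs_pos.2 hi₀) _
    have hp0 : (0:ℝ) < pr := hc.pos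
    have hN : 0 < lpn p b := by
      rw [lpn_eq_sum (by positivity) hpt]
      exact Real.rpow_pos_of_pos hS _
    set N := lpn p b with hNdef
    have hNpr : N ^ pr = ∑ i, |b i| ^ pr := by
      rw [hNdef, lpn_eq_sum (by positivity) hpt, ← hpr,
        ← Real.rpow_mul hS.le, one_div, inv_mul_cancel₀ hc.ne_zero, Real.rpow_one]
    have hNpr1 : (0:ℝ) < N ^ (pr - 1) := Real.rpow_pos_of_pos hN _
    refine ⟨fun i => (if b i < 0 then -1 else 1) * |b i| ^ (pr - 1) / N ^ (pr - 1), ?_, ?_⟩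
    · have hq0 : (0:ℝ) < qr := hc.symm.pos
      have habs : ∀ i, |(if b i < 0 then (-1:ℝ) else 1) * |b i| ^ (pr - 1) / N ^ (pr - 1)|
          = |b i| ^ (pr - 1) / N ^ (pr - 1) := by
        intro i
        rw [abs_div, abs_mul]
        have h1 : |if b i < 0 then (-1:ℝ) else 1| = 1 := by by_cases h : b i < 0 <;> simp [h]
        rw [h1, one_mul, abs_of_nonneg (Real.rpow_nonneg (abs_nonneg _) _),
          abs_of_nonneg (Real.rpow_nonneg hN.le _)]
      rw [lpn_eq_sum (by positivity) hqt, ← hqr]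
      have hterm : ∀ i, |(if b i < 0 then (-1:ℝ) else 1) * |b i| ^ (pr - 1) / N ^ (pr - 1)| ^ qr
          = |b i| ^ pr / N ^ pr := by
        intro i
        rw [habs i, Real.div_rpow (Real.rpow_nonneg (abs_nonneg _) _) (Real.rpow_nonneg hN.le _),
          ← Real.rpow_mul (abs_nonneg _), ← Real.rpow_mul hN.le, hc.sub_one_mul_conj]
      calc (∑ i, |(if b i < 0 then (-1:ℝ) else 1) * |b i| ^ (pr - 1) / N ^ (pr - 1)| ^ qr) ^ (1/qr)
          = (∑ i, |b i| ^ pr / N ^ pr) ^ (1/qr) := by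
            congr 1; exact Finset.sum_congr rfl fun i _ => hterm i
        _ = 1 := by
            rw [← Finset.sum_div, ← hNpr, div_self (Real.rpow_pos_of_pos hN _).ne',
              Real.one_rpow]
        _ ≤ 1 := le_refl _
    · have key : ∀ i, (if b i < 0 then (-1:ℝ) else 1) * |b i| ^ (pr - 1) / N ^ (pr - 1) * b i
          = |b i| ^ pr / N ^ (pr - 1) := by
        intro i
        rcases eq_or_ne (b i) 0 with h0 | h0
        · simp [h0, Real.zero_rpow hc.ne_zero]
        · have hbpos : 0 < |b i| := abs_pos.2 h0
          have hsb : (if b i < 0 then (-1:ℝ) else 1) * b i = |b i| := by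
            by_cases h : b i < 0
            · simp [h, abs_of_neg h]
            · simp [h, abs_of_nonneg (not_lt.1 h)]
          calc (if b i < 0 then (-1:ℝ) else 1) * |b i| ^ (pr - 1) / N ^ (pr - 1) * b i
              = ((if b i < 0 then (-1:ℝ) else 1) * b i) * |b i| ^ (pr - 1) / N ^ (pr - 1) := by
                ring
            _ = |b i| ^ (1:ℝ) * |b i| ^ (pr - 1) / N ^ (pr - 1) := by rw [hsb, Real.rpow_one]
            _ = |b i| ^ pr / N ^ (pr - 1) := by
                rw [← Real.rpow_add hbpos, show (1:ℝ) + (pr - 1) = pr by ring]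
      calc ∑ i, ((if b i < 0 then (-1:ℝ) else 1) * |b i| ^ (pr - 1) / N ^ (pr - 1)) * b i
          = ∑ i, |b i| ^ pr / N ^ (pr - 1) := Finset.sum_congr rfl fun i _ => key i
        _ = N ^ pr / N ^ (pr - 1) := by rw [← Finset.sum_div, ← hNpr]
        _ = N := by
            rw [← Real.rpow_sub hN, show pr - (pr - 1) = 1 by ring, Real.rpow_one]

lemma lpn_mono' {p : ℝ≥0∞} (hp : 1 ≤ p) {x y : ι → ℝ} (h : ∀ i, |x i| ≤ |y i|) :
    lpn p x ≤ lpn p y := by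
  rcases eq_or_ne p ∞ with rfl | hpt
  · rw [lpn_top, lpn_top]
    apply (pi_norm_le_iff_of_nonneg (norm_nonneg _)).2
    intro i
    calc ‖x i‖ = |x i| := rfl
    _ ≤ |y i| := h i
    _ ≤ ‖y‖ := norm_le_pi_norm y i
  · have hp0 : p ≠ 0 := by rintro rfl; simp at hp
    have hr : 0 < p.toReal := ENNReal.toReal_pos hp0 hpt
    rw [lpn_eq_sum hp0 hpt, lpn_eq_sum hp0 hpt]
    apply Real.rpow_le_rpow (Finset.sum_nonneg fun i _ => Real.rpow_nonneg (abs_nonneg _) _)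
      (Finset.sum_le_sum fun i _ => Real.rpow_le_rpow (abs_nonneg _) (h i) hr.le)
      (by positivity)

lemma lpn_nonneg' {p : ℝ≥0∞} (hp : 1 ≤ p) (x : ι → ℝ) : 0 ≤ lpn p x := by
  haveI : Fact (1 ≤ p) := ⟨hp⟩
  exact norm_nonneg ((WithLp.equiv p (ι → ℝ)).symm x)

lemma lpn_smul' {p : ℝ≥0∞} (hp : 1 ≤ p) (c : ℝ) (x : ι → ℝ) :
    lpn p (fun i => c * x i) = |c| * lpn p x := by
  haveI : Fact (1 ≤ p) := ⟨hp⟩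
  have : (fun i => c * x i) = c • x := by ext i; simp [Pi.smul_apply]
  rw [lpn, this, WithLp.equiv_symm_apply, WithLp.toLp_smul, lpn, WithLp.equiv_symm_apply, norm_smul, Real.norm_eq_abs]

lemma lpn_dual_nonneg {p q : ℝ≥0∞} (hp : 1 ≤ p) (hq : 1 ≤ q) (hpq : 1/p + 1/q = 1)
    (b : ι → ℝ) (hb : ∀ i, 0 ≤ b i) :
    ∃ a : ι → ℝ, (∀ i, 0 ≤ a i) ∧ lpn q a ≤ 1 ∧ ∑ i, a i * b i = lpn p b := by
  obtain ⟨a, ha1, ha2⟩ := lpn_dual hp hq hpq b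
  refine ⟨fun i => max (a i) 0, fun i => le_max_right _ _, ?_, ?_⟩
  · refine le_trans (lpn_mono' hq fun i => ?_) ha1
    rw [abs_of_nonneg (le_max_right (a i) 0)]
    exact max_le (le_abs_self _) (abs_nonneg _)
  · have hle : lpn p b ≤ ∑ i, max (a i) 0 * b i := by
      rw [← ha2]
      exact Finset.sum_le_sum fun i _ =>
        mul_le_mul_of_nonneg_right (le_max_left _ _) (hb i)
    have hge : ∑ i, max (a i) 0 * b i ≤ lpn p b := by
      calc ∑ i, max (a i) 0 * b i ≤ ∑ i, |max (a i) 0 * b i| :=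
            Finset.sum_le_sum fun i _ => le_abs_self _
      _ ≤ lpn q (fun i => max (a i) 0) * lpn p b := lpn_holder hp hq hpq _ b
      _ ≤ 1 * lpn p b := by
          apply mul_le_mul_of_nonneg_right _ (lpn_nonneg' hp b)
          refine le_trans (lpn_mono' hq fun i => ?_) ha1
          rw [abs_of_nonneg (le_max_right (a i) 0)]
          exact max_le (le_abs_self _) (abs_nonneg _)
      _ = lpn p b := one_mul _
    exact le_antisymm hge hle

lemma partition_sum {d dbar : ℕ} {G : Fin dbar → Finset (Fin d)} (hG : IsPartition G)
    {M : Type*} [AddCommMonoid M] (f : Fin d → M) :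
    ∑ k, f k = ∑ i, ∑ k ∈ G i, f k := by
  classical
  have hcover : Finset.univ.biUnion G = Finset.univ := by
    ext k
    simp only [Finset.mem_biUnion, Finset.mem_univ, true_and, iff_true]
    exact hG.2.2 k
  rw [← hcover, Finset.sum_biUnion]
  intro i _ j _ hij
  exact hG.2.1 i j hij

section gnormlemmas
variable {d dbar : ℕ} {G : Fin dbar → Finset (Fin d)} {α : Fin dbar → ℝ}

lemma lpn_continuous {p : ℝ≥0∞} (hp : 1 ≤ p) : Continuous fun x : ι → ℝ => lpn p x := by
  haveI : Fact (1 ≤ p) := ⟨hp⟩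
  exact continuous_norm.comp (PiLp.continuous_toLp p (fun _ : ι => ℝ))

lemma gnorm_continuous {q t : ℝ≥0∞} (hq : 1 ≤ q) (ht : 1 ≤ t) :
    Continuous (gnorm G α q t) := by
  unfold gnorm
  exact (lpn_continuous ht).comp (continuous_pi fun i => continuous_const.mul
    ((lpn_continuous hq).comp (continuous_pi fun j => continuous_apply j.1)))

lemma gnorm_nonneg {q t : ℝ≥0∞} (ht : 1 ≤ t) (x : Fin d → ℝ) : 0 ≤ gnorm G α q t x :=
  lpn_nonneg' ht _

lemma gnorm_smul {q t : ℝ≥0∞} (hq : 1 ≤ q) (ht : 1 ≤ t) (c : ℝ) (x : Fin d → ℝ) :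
    gnorm G α q t (fun k => c * x k) = |c| * gnorm G α q t x := by
  unfold gnorm
  have h1 : (fun i => α i * lpn q (fun j : {k // k ∈ G i} => (fun k => c * x k) j.1))
      = fun i => |c| * (α i * lpn q (fun j : {k // k ∈ G i} => x j.1)) := by
    funext i
    rw [show (fun j : {k // k ∈ G i} => (fun k => c * x k) j.1)
        = fun j : {k // k ∈ G i} => c * x j.1 from rfl, lpn_smul' hq]
    ring
  rw [h1, lpn_smul' ht, abs_abs]

lemma gnorm_holder (hG : IsPartition G) (hα : ∀ i, 0 < α i)
    {p q s t : ℝ≥0∞} (hp : 1 ≤ p) (hq : 1 ≤ q) (hs : 1 ≤ s) (ht : 1 ≤ t)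
    (hpq : 1/p + 1/q = 1) (hst : 1/s + 1/t = 1) (u β : Fin d → ℝ) :
    |∑ k, u k * β k| ≤ gnorm G (fun i => (α i)⁻¹) q t u * gnorm G α p s β := by
  rw [partition_sum hG]
  calc |∑ i, ∑ k ∈ G i, u k * β k| ≤ ∑ i, |∑ k ∈ G i, u k * β k| :=
        Finset.abs_sum_le_sum_abs _ _
  _ ≤ ∑ i, ((α i)⁻¹ * lpn q (fun j : {k // k ∈ G i} => u j.1))
        * (α i * lpn p (fun j : {k // k ∈ G i} => β j.1)) := by
      refine Finset.sum_le_sum fun i _ => ?_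
      have h1 : |∑ k ∈ G i, u k * β k| ≤ lpn q (fun j : {k // k ∈ G i} => u j.1)
          * lpn p (fun j : {k // k ∈ G i} => β j.1) := by
        rw [← Finset.sum_coe_sort (G i) (fun k => u k * β k)]
        exact le_trans (Finset.abs_sum_le_sum_abs _ _) (lpn_holder hp hq hpq _ _)
      have h2 : ((α i)⁻¹ * lpn q (fun j : {k // k ∈ G i} => u j.1))
          * (α i * lpn p (fun j : {k // k ∈ G i} => β j.1))
          = lpn q (fun j : {k // k ∈ G i} => u j.1)
          * lpn p (fun j : {k // k ∈ G i} => β j.1) := by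
        field_simp [(hα i).ne']
      rw [h2]; exact h1
  _ ≤ gnorm G (fun i => (α i)⁻¹) q t u * gnorm G α p s β := by
      refine le_trans (Finset.sum_le_sum fun i _ => le_abs_self _) ?_
      exact lpn_holder hs ht hst _ _

lemma gnorm_dual (hG : IsPartition G) (hα : ∀ i, 0 < α i)
    {p q s t : ℝ≥0∞} (hp : 1 ≤ p) (hq : 1 ≤ q) (hs : 1 ≤ s) (ht : 1 ≤ t)
    (hpq : 1/p + 1/q = 1) (hst : 1/s + 1/t = 1) (β : Fin d → ℝ) :
    ∃ v : Fin d → ℝ, gnorm G (fun i => (α i)⁻¹) q t v ≤ 1 ∧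
      ∑ k, v k * β k = gnorm G α p s β := by
  classical
  choose A hA1 hA2 using fun i => lpn_dual hp hq hpq (fun j : {k // k ∈ G i} => β j.1)
  obtain ⟨w, hw0, hw1, hw2⟩ := lpn_dual_nonneg hs ht hst
    (fun i => α i * lpn p (fun j : {k // k ∈ G i} => β j.1))
    (fun i => mul_nonneg (hα i).le (lpn_nonneg' hp _))
  set v : Fin d → ℝ := fun k => ∑ i, if h : k ∈ G i then w i * α i * A i ⟨k, h⟩ else 0 with hv
  have hrestrict : ∀ i, (fun j : {k // k ∈ G i} => v j.1)
      = fun j : {k // k ∈ G i} => (w i * α i) * A i j := by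
    intro i
    funext j
    show (∑ i', if h : (j : Fin d) ∈ G i' then w i' * α i' * A i' ⟨(j : Fin d), h⟩ else 0)
      = w i * α i * A i j
    rw [Finset.sum_eq_single i]
    · rw [dif_pos j.2, Subtype.coe_eta]
    · intro i' _ hne
      rw [dif_neg]
      intro hmem
      exact (Finset.disjoint_left.1 (hG.2.1 i' i hne) hmem) j.2
    · intro h; exact absurd (Finset.mem_univ i) h
  refine ⟨v, ?_, ?_⟩
  · unfold gnorm
    refine le_trans (le_trans (lpn_mono' ht (y := w) fun i => ?_) le_rfl) hw1
    rw [hrestrict i, lpn_smul' hq]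
    have hwa : |w i * α i| = w i * α i := abs_of_nonneg (mul_nonneg (hw0 i) (hα i).le)
    rw [hwa]
    have : (α i)⁻¹ * (w i * α i * lpn q (A i)) = w i * lpn q (A i) := by
      field_simp [(hα i).ne']
    rw [this, abs_of_nonneg (mul_nonneg (hw0 i) (lpn_nonneg' hq _)),
      abs_of_nonneg (hw0 i)]
    calc w i * lpn q (A i) ≤ w i * 1 := mul_le_mul_of_nonneg_left (hA1 i) (hw0 i)
    _ = w i := mul_one _
  · rw [partition_sum hG]
    unfold gnorm
    rw [← hw2]
    refine Finset.sum_congr rfl fun i _ => ?_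
    rw [← Finset.sum_coe_sort (G i) (fun k => v k * β k)]
    calc ∑ j : {k // k ∈ G i}, v j.1 * β j.1
        = ∑ j : {k // k ∈ G i}, (w i * α i) * (A i j * β j.1) := by
          refine Finset.sum_congr rfl fun j _ => ?_
          have := congrFun (hrestrict i) j
          rw [this]; ring
      _ = (w i * α i) * ∑ j : {k // k ∈ G i}, A i j * β j.1 := by rw [Finset.mul_sum]
      _ = w i * (α i * lpn p (fun j : {k // k ∈ G i} => β j.1)) := by rw [hA2 i]; ring

end gnormlemmas

section MeasurePart

lemma measure_map_finset_sum {E F : Type} [MeasurableSpace E] [MeasurableSpace F] {κ : Type}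
    (s : Finset κ) (μ : κ → Measure E) {g : E → F} (hg : Measurable g) :
    (∑ i ∈ s, μ i).map g = ∑ i ∈ s, (μ i).map g := by
  classical
  induction s using Finset.induction with
  | empty => simp
  | insert _ _ h ih =>
      rw [Finset.sum_insert h, Measure.map_add _ _ hg, ih, Finset.sum_insert h]

lemma emp_lintegral {E : Type} [MeasurableSpace E] {n : ℕ} (pt : Fin n → E)
    (f : E → ℝ≥0∞) (hf : Measurable f) :
    ∫⁻ z, f z ∂((n : ℝ≥0∞)⁻¹ • ∑ i : Fin n, Measure.dirac (pt i))
      = (n : ℝ≥0∞)⁻¹ * ∑ i, f (pt i) := by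
  rw [lintegral_smul_measure, lintegral_finset_sum_measure]
  congr 1
  exact Finset.sum_congr rfl fun i _ => lintegral_dirac' _ hf

lemma emp_prob {E : Type} [MeasurableSpace E] {n : ℕ} (hn : 0 < n) (pt : Fin n → E) :
    IsProbabilityMeasure ((n : ℝ≥0∞)⁻¹ • ∑ i : Fin n, Measure.dirac (pt i)) := by
  constructor
  rw [Measure.smul_apply, Measure.finset_sum_apply]
  simp only [measure_univ, Finset.sum_const, Finset.card_univ, Fintype.card_fin, nsmul_eq_mul,
    mul_one, smul_eq_mul]
  exact ENNReal.inv_mul_cancel (by exact_mod_cast hn.ne') (ENNReal.natCast_ne_top n)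

lemma emp_map {E F : Type} [MeasurableSpace E] [MeasurableSpace F] {n : ℕ} (pt : Fin n → E)
    {g : E → F} (hg : Measurable g) :
    (((n : ℝ≥0∞)⁻¹ • ∑ i : Fin n, Measure.dirac (pt i)).map g)
      = (n : ℝ≥0∞)⁻¹ • ∑ i : Fin n, Measure.dirac (g (pt i)) := by
  rw [Measure.map_smul, measure_map_finset_sum _ _ hg]
  congr 1
  exact Finset.sum_congr rfl fun i _ => Measure.map_dirac' hg _

lemma ofReal_sq_eq (e : ℝ) : ENNReal.ofReal (e ^ 2) = ENNReal.ofReal |e| ^ (2 : ℝ) := by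
  rw [← sq_abs, ENNReal.ofReal_pow (abs_nonneg _)]
  rw [show ((2:ℝ)) = ((2:ℕ):ℝ) by norm_num, ENNReal.rpow_natCast]

end MeasurePart

section Main

variable {d dbar : ℕ} {n : ℕ}

lemma loss_measurable (β : Fin d → ℝ) :
    Measurable (fun z : (Fin d → ℝ) × ℝ => ENNReal.ofReal ((z.2 - ∑ k, z.1 k * β k) ^ 2)) := by
  apply ENNReal.continuous_ofReal.measurable.comp
  apply Measurable.pow_const
  apply Measurable.sub measurable_snd
  exact Finset.measurable_sum _ fun k _ =>
    ((measurable_pi_apply k).comp measurable_fst).mul_const _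

lemma upper_bound (hn : 0 < n)
    (G : Fin dbar → Finset (Fin d)) (hG : IsPartition G)
    (α : Fin dbar → ℝ) (hα : ∀ i, 0 < α i)
    (p q s t : ℝ≥0∞) (hp : 1 ≤ p) (hq : 1 ≤ q) (hs : 1 ≤ s) (ht : 1 ≤ t)
    (hpq : 1 / p + 1 / q = 1) (hst : 1 / s + 1 / t = 1)
    (X : Fin n → Fin d → ℝ) (Y : Fin n → ℝ) (β : Fin d → ℝ) {δ' : ℝ} (hδ' : 0 ≤ δ')
    (P : Measure ((Fin d → ℝ) × ℝ))
    (π : Measure (((Fin d → ℝ) × ℝ) × ((Fin d → ℝ) × ℝ)))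
    (hπ1 : π.map Prod.fst = P)
    (hπ2 : π.map Prod.snd = (n : ℝ≥0∞)⁻¹ • ∑ i : Fin n, Measure.dirac (X i, Y i))
    (hcost : ∫⁻ z, (if z.1.2 = z.2.2 then
        ENNReal.ofReal ((gnorm G (fun i => (α i)⁻¹) q t (z.1.1 - z.2.1)) ^ 2) else ⊤) ∂π
      ≤ ENNReal.ofReal δ') :
    ∫⁻ z, ENNReal.ofReal ((z.2 - ∑ k, z.1 k * β k) ^ 2) ∂P
      ≤ ENNReal.ofReal ((Real.sqrt ((1 / (n:ℝ)) * ∑ i, (Y i - ∑ k, X i k * β k) ^ 2)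
          + Real.sqrt δ' * gnorm G α p s β) ^ 2) := by
  set B := gnorm G α p s β with hBdef
  have hB : 0 ≤ B := gnorm_nonneg hs β
  set I : ℝ := (1 / (n:ℝ)) * ∑ i, (Y i - ∑ k, X i k * β k) ^ 2 with hIdef
  have hI : 0 ≤ I := by positivity
  have mf := loss_measurable β
  set cost : ((Fin d → ℝ) × ℝ) × ((Fin d → ℝ) × ℝ) → ℝ≥0∞ := fun z =>
    if z.1.2 = z.2.2 then
      ENNReal.ofReal ((gnorm G (fun i => (α i)⁻¹) q t (z.1.1 - z.2.1)) ^ 2) else ⊤ with hcostdef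
  -- a.e. equality of second coordinates
  have hSmeas : MeasurableSet {z : ((Fin d → ℝ) × ℝ) × ((Fin d → ℝ) × ℝ) | z.1.2 = z.2.2} :=
    measurableSet_eq_fun (measurable_snd.comp measurable_fst) (measurable_snd.comp measurable_snd)
  have hS0 : π {z : ((Fin d → ℝ) × ℝ) × ((Fin d → ℝ) × ℝ) | z.1.2 = z.2.2}ᶜ = 0 := by
    by_contra h
    have hbound : (⊤ : ℝ≥0∞) * π {z : ((Fin d → ℝ) × ℝ) × ((Fin d → ℝ) × ℝ) | z.1.2 = z.2.2}ᶜ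
        ≤ ENNReal.ofReal δ' := by
      rw [← lintegral_indicator_const hSmeas.compl ⊤]
      refine le_trans (lintegral_mono fun z => ?_) hcost
      by_cases hz : z.1.2 = z.2.2
      · have : z ∉ {z : ((Fin d → ℝ) × ℝ) × ((Fin d → ℝ) × ℝ) | z.1.2 = z.2.2}ᶜ := by
          simp [hz]
        rw [Set.indicator_of_notMem this]
        exact bot_le
      · have : z ∈ {z : ((Fin d → ℝ) × ℝ) × ((Fin d → ℝ) × ℝ) | z.1.2 = z.2.2}ᶜ := by
          simp [hz]
        rw [Set.indicator_of_mem this]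
        simp [hz]
    rw [ENNReal.top_mul h] at hbound
    exact absurd (hbound.trans_lt ENNReal.ofReal_lt_top) (by simp)
  have hae : ∀ᵐ z ∂π, z.1.2 = z.2.2 := by
    rw [MeasureTheory.ae_iff]
    exact hS0
  -- the three functions
  set F : ((Fin d → ℝ) × ℝ) × ((Fin d → ℝ) × ℝ) → ℝ≥0∞ := fun z =>
    ENNReal.ofReal |z.1.2 - ∑ k, z.1.1 k * β k| with hFdef
  set F' : ((Fin d → ℝ) × ℝ) × ((Fin d → ℝ) × ℝ) → ℝ≥0∞ := fun z =>
    ENNReal.ofReal |z.2.2 - ∑ k, z.2.1 k * β k| with hF'def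
  set Gc : ((Fin d → ℝ) × ℝ) × ((Fin d → ℝ) × ℝ) → ℝ≥0∞ := fun z =>
    ENNReal.ofReal (B * gnorm G (fun i => (α i)⁻¹) q t (z.1.1 - z.2.1)) with hGcdef
  have hF'meas : Measurable F' := by
    apply ENNReal.continuous_ofReal.measurable.comp
    apply Measurable.abs
    apply Measurable.sub (measurable_snd.comp measurable_snd)
    exact Finset.measurable_sum _ fun k _ =>
      ((measurable_pi_apply k).comp (measurable_fst.comp measurable_snd)).mul_const _
  have hGcmeas : Measurable Gc := by
    apply ENNReal.continuous_ofReal.measurable.comp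
    apply Measurable.const_mul
    apply (gnorm_continuous hq ht).measurable.comp
    exact (measurable_fst.comp measurable_fst).sub (measurable_fst.comp measurable_snd)
  -- pointwise a.e. triangle + Hölder inequality
  have haeF : ∀ᵐ z ∂π, F z ≤ F' z + Gc z := by
    filter_upwards [hae] with z hz
    have hg0 : 0 ≤ gnorm G (fun i => (α i)⁻¹) q t (z.1.1 - z.2.1) := gnorm_nonneg ht _
    have hreal : |z.1.2 - ∑ k, z.1.1 k * β k| ≤ |z.2.2 - ∑ k, z.2.1 k * β k|
        + B * gnorm G (fun i => (α i)⁻¹) q t (z.1.1 - z.2.1) := by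
      have hdec : z.1.2 - ∑ k, z.1.1 k * β k
          = (z.2.2 - ∑ k, z.2.1 k * β k) - ∑ k, (z.1.1 - z.2.1) k * β k := by
        rw [hz]
        simp only [Pi.sub_apply, sub_mul, Finset.sum_sub_distrib]
        ring
      rw [hdec]
      refine le_trans (abs_sub _ _) ?_
      refine add_le_add le_rfl ?_
      calc |∑ k, (z.1.1 - z.2.1) k * β k|
          ≤ gnorm G (fun i => (α i)⁻¹) q t (z.1.1 - z.2.1) * B :=
            gnorm_holder hG hα hp hq hs ht hpq hst _ β
      _ = B * gnorm G (fun i => (α i)⁻¹) q t (z.1.1 - z.2.1) := mul_comm _ _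
    calc F z ≤ ENNReal.ofReal (|z.2.2 - ∑ k, z.2.1 k * β k|
          + B * gnorm G (fun i => (α i)⁻¹) q t (z.1.1 - z.2.1)) :=
        ENNReal.ofReal_le_ofReal hreal
    _ = F' z + Gc z := ENNReal.ofReal_add (abs_nonneg _) (mul_nonneg hB hg0)
  -- identify the P-integral
  have hPmap : ∫⁻ z, ENNReal.ofReal ((z.2 - ∑ k, z.1 k * β k) ^ 2) ∂P
      = ∫⁻ z, F z ^ (2:ℝ) ∂π := by
    rw [← hπ1, lintegral_map mf measurable_fst]
    exact lintegral_congr fun z => ofReal_sq_eq _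
  -- identify the Pn-integral
  have hPn : ∫⁻ z, F' z ^ (2:ℝ) ∂π = ENNReal.ofReal I := by
    have h1 : ∫⁻ z, ENNReal.ofReal ((z.2 - ∑ k, z.1 k * β k) ^ 2) ∂(π.map Prod.snd)
        = ∫⁻ z, F' z ^ (2:ℝ) ∂π := by
      rw [lintegral_map mf measurable_snd]
      exact lintegral_congr fun z => ofReal_sq_eq _
    rw [hπ2, emp_lintegral _ _ mf] at h1
    rw [← h1, hIdef, ENNReal.ofReal_mul (by positivity),
      ENNReal.ofReal_sum_of_nonneg (fun i _ => sq_nonneg _)]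
    congr 1
    rw [one_div, ENNReal.ofReal_inv_of_pos (by exact_mod_cast hn), ENNReal.ofReal_natCast]
  -- cost bound for Gc
  have hGc2 : ∫⁻ z, Gc z ^ (2:ℝ) ∂π ≤ ENNReal.ofReal (B ^ 2) * ENNReal.ofReal δ' := by
    have hpt : ∀ z, Gc z ^ (2:ℝ) ≤ ENNReal.ofReal (B ^ 2) * cost z := by
      intro z
      have hg0 : 0 ≤ gnorm G (fun i => (α i)⁻¹) q t (z.1.1 - z.2.1) := gnorm_nonneg ht _
      have h1 : Gc z ^ (2:ℝ)
          = ENNReal.ofReal (B ^ 2) *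
            ENNReal.ofReal ((gnorm G (fun i => (α i)⁻¹) q t (z.1.1 - z.2.1)) ^ 2) := by
        rw [hGcdef]
        simp only []
        rw [← abs_of_nonneg (mul_nonneg hB hg0), ← ofReal_sq_eq, mul_pow,
          ENNReal.ofReal_mul (by positivity)]
      rw [h1]
      apply mul_le_mul_right
      rw [hcostdef]
      by_cases hz : z.1.2 = z.2.2
      · simp [hz]
      · simp [hz]
    calc ∫⁻ z, Gc z ^ (2:ℝ) ∂π ≤ ∫⁻ z, ENNReal.ofReal (B ^ 2) * cost z ∂π :=
          lintegral_mono hpt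
    _ = ENNReal.ofReal (B ^ 2) * ∫⁻ z, cost z ∂π :=
          lintegral_const_mul' _ _ ENNReal.ofReal_ne_top
    _ ≤ ENNReal.ofReal (B ^ 2) * ENNReal.ofReal δ' := mul_le_mul_right hcost _
  -- Minkowski
  have hMink := ENNReal.lintegral_Lp_add_le (p := (2:ℝ)) (μ := π) hF'meas.aemeasurable
    hGcmeas.aemeasurable one_le_two
  have hstep : (∫⁻ z, F z ^ (2:ℝ) ∂π) ^ (1/(2:ℝ))
      ≤ ENNReal.ofReal (Real.sqrt I + Real.sqrt δ' * B) := by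
    have h1 : (∫⁻ z, F z ^ (2:ℝ) ∂π) ^ (1/(2:ℝ))
        ≤ (∫⁻ z, (F' z + Gc z) ^ (2:ℝ) ∂π) ^ (1/(2:ℝ)) := by
      apply ENNReal.rpow_le_rpow _ (by norm_num)
      refine lintegral_mono_ae ?_
      filter_upwards [haeF] with z hz
      exact ENNReal.rpow_le_rpow hz (by norm_num)
    refine h1.trans (hMink.trans ?_)
    have h2 : (∫⁻ z, F' z ^ (2:ℝ) ∂π) ^ (1/(2:ℝ)) = ENNReal.ofReal (Real.sqrt I) := by
      rw [hPn, ENNReal.ofReal_rpow_of_nonneg hI (by norm_num), ← Real.sqrt_eq_rpow]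
    have h3 : (∫⁻ z, Gc z ^ (2:ℝ) ∂π) ^ (1/(2:ℝ)) ≤ ENNReal.ofReal (Real.sqrt δ' * B) := by
      refine le_trans (ENNReal.rpow_le_rpow hGc2 (by norm_num)) ?_
      rw [← ENNReal.ofReal_mul (by positivity),
        ENNReal.ofReal_rpow_of_nonneg (by positivity) (by norm_num)]
      apply ENNReal.ofReal_le_ofReal
      rw [← Real.sqrt_eq_rpow, Real.sqrt_mul (sq_nonneg B), Real.sqrt_sq hB]
      rw [mul_comm]
    rw [h2]
    refine le_trans (add_le_add le_rfl h3) ?_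
    rw [← ENNReal.ofReal_add (Real.sqrt_nonneg _) (by positivity)]
  rw [hPmap]
  have hid : ∫⁻ z, F z ^ (2:ℝ) ∂π = ((∫⁻ z, F z ^ (2:ℝ) ∂π) ^ (1/(2:ℝ))) ^ (2:ℝ) := by
    rw [← ENNReal.rpow_mul]
    norm_num
  rw [hid]
  calc ((∫⁻ z, F z ^ (2:ℝ) ∂π) ^ (1/(2:ℝ))) ^ (2:ℝ)
      ≤ ENNReal.ofReal (Real.sqrt I + Real.sqrt δ' * B) ^ (2:ℝ) :=
        ENNReal.rpow_le_rpow hstep (by norm_num)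
  _ = ENNReal.ofReal ((Real.sqrt I + Real.sqrt δ' * B) ^ 2) := by
      rw [ENNReal.ofReal_rpow_of_nonneg (by positivity) (by norm_num)]
      congr 1
      rw [show ((2:ℝ)) = ((2:ℕ):ℝ) by norm_num, Real.rpow_natCast]

end Main

lemma emp_ofReal (hn : 0 < n) (x : Fin n → ℝ) (hx : ∀ i, 0 ≤ x i) :
    (n : ℝ≥0∞)⁻¹ * ∑ i, ENNReal.ofReal (x i) = ENNReal.ofReal ((1/(n:ℝ)) * ∑ i, x i) := by
  rw [ENNReal.ofReal_mul (by positivity), ENNReal.ofReal_sum_of_nonneg (fun i _ => hx i),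
    one_div, ENNReal.ofReal_inv_of_pos (by exact_mod_cast hn), ENNReal.ofReal_natCast]

lemma cost_measurable
    (G : Fin dbar → Finset (Fin d)) (α : Fin dbar → ℝ) {q t : ℝ≥0∞} (hq : 1 ≤ q) (ht : 1 ≤ t) :
    Measurable (fun z : ((Fin d → ℝ) × ℝ) × ((Fin d → ℝ) × ℝ) =>
      if z.1.2 = z.2.2 then
        ENNReal.ofReal ((gnorm G (fun i => (α i)⁻¹) q t (z.1.1 - z.2.1)) ^ 2) else ⊤) := by
  apply Measurable.ite
  · exact measurableSet_eq_fun (measurable_snd.comp measurable_fst)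
      (measurable_snd.comp measurable_snd)
  · apply ENNReal.continuous_ofReal.measurable.comp
    apply Measurable.pow_const
    apply (gnorm_continuous hq ht).measurable.comp
    exact (measurable_fst.comp measurable_fst).sub (measurable_fst.comp measurable_snd)
  · exact measurable_const

lemma lower_bound (hn : 0 < n)
    (G : Fin dbar → Finset (Fin d)) (hG : IsPartition G)
    (α : Fin dbar → ℝ) (hα : ∀ i, 0 < α i)
    (p q s t : ℝ≥0∞) (hp : 1 ≤ p) (hq : 1 ≤ q) (hs : 1 ≤ s) (ht : 1 ≤ t)
    (hpq : 1 / p + 1 / q = 1) (hst : 1 / s + 1 / t = 1)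
    (X : Fin n → Fin d → ℝ) (Y : Fin n → ℝ) (β : Fin d → ℝ) {δ : ℝ} (hδ : 0 < δ) :
    ∃ P : Measure ((Fin d → ℝ) × ℝ), IsProbabilityMeasure P ∧
      Dc (fun u w => if u.2 = w.2 then
          ENNReal.ofReal ((gnorm G (fun i => (α i)⁻¹) q t (u.1 - w.1)) ^ 2) else ⊤)
        P ((n : ℝ≥0∞)⁻¹ • ∑ i : Fin n, Measure.dirac (X i, Y i)) ≤ ENNReal.ofReal δ ∧
      ∫⁻ z, ENNReal.ofReal ((z.2 - ∑ k, z.1 k * β k) ^ 2) ∂P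
        = ENNReal.ofReal ((Real.sqrt ((1 / (n:ℝ)) * ∑ i, (Y i - ∑ k, X i k * β k) ^ 2)
            + Real.sqrt δ * gnorm G α p s β) ^ 2) := by
  classical
  set B := gnorm G α p s β with hBdef
  have hB : 0 ≤ B := gnorm_nonneg hs β
  set e : Fin n → ℝ := fun i => Y i - ∑ k, X i k * β k with hedef
  set I : ℝ := (1 / (n:ℝ)) * ∑ i, e i ^ 2 with hIdef
  have hI : 0 ≤ I := by positivity
  have hnR : (0:ℝ) < n := by exact_mod_cast hn
  obtain ⟨v, hv1, hv2⟩ := gnorm_dual hG hα hp hq hs ht hpq hst β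
  have hv0 : 0 ≤ gnorm G (fun i => (α i)⁻¹) q t v := gnorm_nonneg ht v
  set η : Fin n → ℝ := fun i => Real.sqrt δ * (if I = 0 then 1 else |e i| / Real.sqrt I)
    with hηdef
  have hη0 : ∀ i, 0 ≤ η i := by
    intro i
    apply mul_nonneg (Real.sqrt_nonneg _)
    by_cases h : I = 0 <;> simp [h] <;> positivity
  set c : Fin n → ℝ := fun i => (if 0 ≤ e i then (1:ℝ) else -1) * η i with hcdef
  have habsc : ∀ i, |c i| = η i := by
    intro i
    rw [hcdef]
    by_cases h : 0 ≤ e i <;>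
      simp [h, abs_mul, abs_of_nonneg (hη0 i)]
  set X' : Fin n → Fin d → ℝ := fun i => fun k => X i k - c i * v k with hX'def
  set P : Measure ((Fin d → ℝ) × ℝ) :=
    (n : ℝ≥0∞)⁻¹ • ∑ i : Fin n, Measure.dirac (X' i, Y i) with hPdef
  set π : Measure (((Fin d → ℝ) × ℝ) × ((Fin d → ℝ) × ℝ)) :=
    (n : ℝ≥0∞)⁻¹ • ∑ i : Fin n, Measure.dirac ((X' i, Y i), (X i, Y i)) with hπdef
  have hmap1 : π.map Prod.fst = P := by
    rw [hπdef, emp_map _ measurable_fst, hPdef]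
  have hmap2 : π.map Prod.snd = (n : ℝ≥0∞)⁻¹ • ∑ i : Fin n, Measure.dirac (X i, Y i) := by
    rw [hπdef, emp_map _ measurable_snd]
  -- sum of η² equals δ
  have hsum_eta : (1 / (n:ℝ)) * ∑ i, η i ^ 2 = δ := by
    by_cases h : I = 0
    · simp only [hηdef, h, if_true]
      rw [Finset.sum_const]
      simp only [mul_one, Finset.card_univ, Fintype.card_fin, nsmul_eq_mul]
      rw [Real.sq_sqrt hδ.le]
      field_simp
    · have hIpos : 0 < I := lt_of_le_of_ne hI (Ne.symm h)
      have hsqI : Real.sqrt I ≠ 0 := (Real.sqrt_pos.2 hIpos).ne'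
      have hsum : ∑ i, e i ^ 2 = n * I := by
        rw [hIdef]; field_simp
      have hterm : ∀ i, η i ^ 2 = δ * e i ^ 2 / I := by
        intro i
        simp only [hηdef, h, if_false]
        rw [mul_pow, div_pow, Real.sq_sqrt hδ.le, sq_abs, Real.sq_sqrt hI]
        ring
      rw [Finset.sum_congr rfl fun i _ => hterm i, ← Finset.sum_div, ← Finset.mul_sum, hsum]
      field_simp
  -- cost integral bound
  have hcost_int : ∫⁻ z, (if z.1.2 = z.2.2 then
      ENNReal.ofReal ((gnorm G (fun i => (α i)⁻¹) q t (z.1.1 - z.2.1)) ^ 2) else ⊤) ∂π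
      ≤ ENNReal.ofReal δ := by
    rw [hπdef, emp_lintegral _ _ (cost_measurable G α hq ht)]
    have hterm : ∀ i, (if ((X' i, Y i) : (Fin d → ℝ) × ℝ).2 = ((X i, Y i) : (Fin d → ℝ) × ℝ).2
        then ENNReal.ofReal ((gnorm G (fun i => (α i)⁻¹) q t ((X' i, Y i).1 - (X i, Y i).1)) ^ 2)
        else ⊤) ≤ ENNReal.ofReal (η i ^ 2) := by
      intro i
      rw [if_pos rfl]
      apply ENNReal.ofReal_le_ofReal
      have hsub : ((X' i, Y i).1 - ((X i, Y i) : (Fin d → ℝ) × ℝ).1)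
          = fun k => (-(c i)) * v k := by
        funext k
        simp only [hX'def, Pi.sub_apply]
        ring
      rw [hsub, gnorm_smul hq ht, abs_neg, habsc i]
      calc (η i * gnorm G (fun i => (α i)⁻¹) q t v) ^ 2
          ≤ (η i * 1) ^ 2 := by
            apply pow_le_pow_left₀ (mul_nonneg (hη0 i) hv0)
            exact mul_le_mul_of_nonneg_left hv1 (hη0 i)
      _ = η i ^ 2 := by ring
    calc (n : ℝ≥0∞)⁻¹ * ∑ i, (if ((X' i, Y i) : (Fin d → ℝ) × ℝ).2
          = ((X i, Y i) : (Fin d → ℝ) × ℝ).2 then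
          ENNReal.ofReal ((gnorm G (fun i => (α i)⁻¹) q t ((X' i, Y i).1 - (X i, Y i).1)) ^ 2)
          else ⊤)
        ≤ (n : ℝ≥0∞)⁻¹ * ∑ i, ENNReal.ofReal (η i ^ 2) := by
          apply mul_le_mul_right
          exact Finset.sum_le_sum fun i _ => hterm i
    _ = ENNReal.ofReal ((1/(n:ℝ)) * ∑ i, η i ^ 2) := emp_ofReal hn _ (fun i => sq_nonneg _)
    _ = ENNReal.ofReal δ := by rw [hsum_eta]
  refine ⟨P, ?_, ?_, ?_⟩
  · rw [hPdef]; exact emp_prob hn _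
  · refine le_trans ?_ hcost_int
    apply iInf_le_of_le π
    rw [iInf_pos hmap1, iInf_pos hmap2]
  · -- value of the integral
    rw [hPdef, emp_lintegral _ _ (loss_measurable β)]
    have hterm : ∀ i, ENNReal.ofReal ((((X' i, Y i) : (Fin d → ℝ) × ℝ).2
        - ∑ k, (X' i, Y i).1 k * β k) ^ 2) = ENNReal.ofReal ((e i + c i * B) ^ 2) := by
      intro i
      congr 1
      have : (((X' i, Y i) : (Fin d → ℝ) × ℝ).2 - ∑ k, (X' i, Y i).1 k * β k)
          = e i + c i * B := by
        simp only [hX'def, hedef]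
        rw [show ∑ k, (X i k - c i * v k) * β k
            = ∑ k, X i k * β k - c i * ∑ k, v k * β k by
          rw [Finset.mul_sum, ← Finset.sum_sub_distrib]
          exact Finset.sum_congr rfl fun k _ => by ring]
        rw [hv2, ← hBdef]
        ring
      rw [this]
    rw [Finset.sum_congr rfl fun i _ => hterm i, emp_ofReal hn _ (fun i => sq_nonneg _)]
    congr 1
    -- real computation
    have habs : ∀ i, (e i + c i * B) ^ 2 = (|e i| + η i * B) ^ 2 := by
      intro i
      rw [hcdef]
      by_cases h : 0 ≤ e i
      · simp only [h, if_true, one_mul]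
        rw [abs_of_nonneg h]
      · simp only [h, if_false]
        rw [abs_of_neg (not_le.1 h)]
        ring
    rw [Finset.sum_congr rfl fun i _ => habs i]
    by_cases h : I = 0
    · have he0 : ∀ i, e i = 0 := by
        intro i
        have hsum0 : ∑ j, e j ^ 2 = 0 := by
          have h2 : (1 / (n:ℝ)) * ∑ j, e j ^ 2 = 0 := by rw [← hIdef]; exact h
          rcases mul_eq_zero.1 h2 with h3 | h3
          · exact absurd h3 (by positivity)
          · exact h3
        have := Finset.sum_eq_zero_iff_of_nonneg (fun j _ => sq_nonneg (e j)) |>.1 hsum0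
          i (Finset.mem_univ i)
        exact pow_eq_zero_iff (n := 2) (by norm_num) |>.1 this
      simp only [hηdef, h, if_true, mul_one]
      rw [Finset.sum_congr rfl fun i _ => by rw [he0 i]]
      rw [Finset.sum_const]
      simp only [abs_zero, zero_add, Finset.card_univ, Fintype.card_fin, nsmul_eq_mul]
      rw [Real.sqrt_zero, zero_add]
      field_simp
    · have hIpos : 0 < I := lt_of_le_of_ne hI (Ne.symm h)
      have hsqI : 0 < Real.sqrt I := Real.sqrt_pos.2 hIpos
      have hterm2 : ∀ i, (|e i| + η i * B) ^ 2
          = e i ^ 2 * ((1 + Real.sqrt δ * B / Real.sqrt I) ^ 2) := by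
        intro i
        simp only [hηdef, h, if_false]
        rw [show |e i| + Real.sqrt δ * (|e i| / Real.sqrt I) * B
            = |e i| * (1 + Real.sqrt δ * B / Real.sqrt I) by ring]
        rw [mul_pow, sq_abs]
      rw [Finset.sum_congr rfl fun i _ => hterm2 i, ← Finset.sum_mul]
      have hsum : ∑ i, e i ^ 2 = n * I := by rw [hIdef]; field_simp
      rw [hsum]
      have hIsq : I = Real.sqrt I ^ 2 := (Real.sq_sqrt hI).symm
      rw [show (1 / (n:ℝ)) * ((n:ℝ) * I * (1 + Real.sqrt δ * B / Real.sqrt I) ^ 2)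
          = I * (1 + Real.sqrt δ * B / Real.sqrt I) ^ 2 by field_simp]
      rw [hIsq, ← mul_pow]
      congr 1
      field_simp
      rw [Real.sqrt_sq (Real.sqrt_nonneg _)]


theorem statement6 {d dbar : ℕ} (hd : 1 ≤ d) {n : ℕ} (hn : 0 < n)
    (G : Fin dbar → Finset (Fin d)) (hG : IsPartition G)
    (α : Fin dbar → ℝ) (hα : ∀ i, 0 < α i)
    (p q s t : ℝ≥0∞) (hp : 1 ≤ p) (hq : 1 ≤ q) (hs : 1 ≤ s) (ht : 1 ≤ t)
    (hpq : 1 / p + 1 / q = 1) (hst : 1 / s + 1 / t = 1)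
    (X : Fin n → Fin d → ℝ) (Y : Fin n → ℝ) (β : Fin d → ℝ) (δ : ℝ) (hδ : 0 < δ) :
    (⨆ (P : Measure ((Fin d → ℝ) × ℝ)) (_ : IsProbabilityMeasure P)
        (_ : Dc
            (fun u w => if u.2 = w.2 then
              ENNReal.ofReal ((gnorm G (fun i => (α i)⁻¹) q t (u.1 - w.1)) ^ 2) else ⊤)
            P ((n : ℝ≥0∞)⁻¹ • ∑ i : Fin n, Measure.dirac (X i, Y i)) ≤ ENNReal.ofReal δ),
      ∫⁻ z, ENNReal.ofReal ((z.2 - ∑ k, z.1 k * β k) ^ 2) ∂P)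
    = ((∫⁻ z, ENNReal.ofReal ((z.2 - ∑ k, z.1 k * β k) ^ 2)
            ∂((n : ℝ≥0∞)⁻¹ • ∑ i : Fin n, Measure.dirac (X i, Y i))) ^ (1 / 2 : ℝ)
        + ENNReal.ofReal (Real.sqrt δ * gnorm G α p s β)) ^ 2 := by
  classical
  set B := gnorm G α p s β with hBdef
  have hB : 0 ≤ B := gnorm_nonneg hs β
  set I : ℝ := (1 / (n:ℝ)) * ∑ i, (Y i - ∑ k, X i k * β k) ^ 2 with hIdef
  have hI : 0 ≤ I := by positivity
  have hPnint : ∫⁻ z, ENNReal.ofReal ((z.2 - ∑ k, z.1 k * β k) ^ 2)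
      ∂((n : ℝ≥0∞)⁻¹ • ∑ i : Fin n, Measure.dirac (X i, Y i)) = ENNReal.ofReal I := by
    rw [emp_lintegral _ _ (loss_measurable β), emp_ofReal hn _ (fun i => sq_nonneg _)]
  have hRHS : ((∫⁻ z, ENNReal.ofReal ((z.2 - ∑ k, z.1 k * β k) ^ 2)
        ∂((n : ℝ≥0∞)⁻¹ • ∑ i : Fin n, Measure.dirac (X i, Y i))) ^ (1 / 2 : ℝ)
      + ENNReal.ofReal (Real.sqrt δ * B)) ^ 2
      = ENNReal.ofReal ((Real.sqrt I + Real.sqrt δ * B) ^ 2) := by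
    rw [hPnint, ENNReal.ofReal_rpow_of_nonneg hI (by norm_num), ← Real.sqrt_eq_rpow,
      ← ENNReal.ofReal_add (Real.sqrt_nonneg _) (by positivity),
      ← ENNReal.ofReal_pow (by positivity)]
  rw [hRHS]
  apply le_antisymm
  · refine iSup_le fun P => iSup_le fun hP => iSup_le fun hDc => ?_
    have key : ∀ δ' : ℝ, δ' ∈ Set.Ioi δ →
        ∫⁻ z, ENNReal.ofReal ((z.2 - ∑ k, z.1 k * β k) ^ 2) ∂P
          ≤ ENNReal.ofReal ((Real.sqrt I + Real.sqrt δ' * B) ^ 2) := by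
      intro δ' hδ'
      have hδ'0 : 0 ≤ δ' := le_of_lt (hδ.trans hδ')
      have hlt : Dc (fun u w => if u.2 = w.2 then
          ENNReal.ofReal ((gnorm G (fun i => (α i)⁻¹) q t (u.1 - w.1)) ^ 2) else ⊤)
          P ((n : ℝ≥0∞)⁻¹ • ∑ i : Fin n, Measure.dirac (X i, Y i))
          < ENNReal.ofReal δ' :=
        lt_of_le_of_lt hDc ((ENNReal.ofReal_lt_ofReal_iff (hδ.trans hδ')).2 hδ')
      rw [Dc, iInf_lt_iff] at hlt
      obtain ⟨π, hπlt⟩ := hlt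
      rw [iInf_lt_iff] at hπlt
      obtain ⟨h1, hπlt⟩ := hπlt
      rw [iInf_lt_iff] at hπlt
      obtain ⟨h2, hπlt⟩ := hπlt
      exact upper_bound hn G hG α hα p q s t hp hq hs ht hpq hst X Y β hδ'0 P π h1 h2 hπlt.le
    have hco : Filter.Tendsto (fun δ' : ℝ =>
        ENNReal.ofReal ((Real.sqrt I + Real.sqrt δ' * B) ^ 2)) (nhdsWithin δ (Set.Ioi δ))
        (nhds (ENNReal.ofReal ((Real.sqrt I + Real.sqrt δ * B) ^ 2))) := by
      apply Filter.Tendsto.mono_left _ (nhdsWithin_le_nhds)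
      apply (ENNReal.continuous_ofReal.continuousAt).tendsto.comp
      apply ContinuousAt.pow
      exact continuousAt_const.add ((Real.continuous_sqrt.continuousAt).mul continuousAt_const)
    exact ge_of_tendsto hco (eventually_nhdsWithin_of_forall key)
  · obtain ⟨P, hP1, hP2, hP3⟩ :=
      lower_bound hn G hG α hα p q s t hp hq hs ht hpq hst X Y β hδ
    rw [← hP3]
    exact le_iSup_of_le P (by rw [iSup_pos hP1, iSup_pos hP2])
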